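/- arXiv:1604.06031 — 5 statements merged into one kernel-verified Lean document; each statement's English description precedes it below -/
import Mathlib

section
/- For any group G and any integers i, j ≥ 1, the p-th power subgroup satisfies γ_i(G)^(p^j) ≤ γ_{i+j}(G) whenever G/[G,G] has exponent p; consequently, if exp(G/G') = p then the p-central series coincides with the lower central series: λ_n(G) = γ_n(G) for all n ≥ 1. -/
/-- The subgroup generated by `m`-th powers of elements of `H`. -/
def pPow {G : Type*} [Group G] (H : Subgroup G) (m : ℕ) : Subgroup G :=
  Subgroup.closure {x : G | ∃ h ∈ H, x = h ^ m}

/-- The `p`-central series: `lam p 1 = ⊤` and `lam p (n+1) = [lam p n, G] ⊔ (lam p n)^p`.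
    (We also set `lam p 0 = ⊤`.) -/
def lam {G : Type*} [Group G] (p : ℕ) : ℕ → Subgroup G
  | 0 => ⊤
  | 1 => ⊤
  | (n+2) => ⁅(lam p (n+1) : Subgroup G), (⊤ : Subgroup G)⁆ ⊔ pPow (lam p (n+1)) p

theorem pPow_normal {G : Type*} [Group G] (H : Subgroup G) [hH : H.Normal] (m : ℕ) :
    (pPow H m).Normal := by
  have key : ∀ x ∈ pPow H m, ∀ g : G, g * x * g⁻¹ ∈ pPow H m := by
    intro x hx
    induction hx using Subgroup.closure_induction with
    | mem y hy =>
        intro g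
        obtain ⟨h, hh, rfl⟩ := hy
        refine Subgroup.subset_closure ⟨g * h * g⁻¹, hH.conj_mem h hh g, ?_⟩
        exact conj_pow.symm
    | one => intro g; simpa using (pPow H m).one_mem
    | mul x y hx hy ihx ihy =>
        intro g
        have h2 := mul_mem (ihx g) (ihy g)
        have : g * x * g⁻¹ * (g * y * g⁻¹) = g * (x * y) * g⁻¹ := by group
        rwa [this] at h2
    | inv x hx ihx =>
        intro g
        have h2 := inv_mem (ihx g)
        have : (g * x * g⁻¹)⁻¹ = g * x⁻¹ * g⁻¹ := by group
        rwa [this] at h2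
  exact ⟨fun x hx g => key x hx g⟩

theorem lam_normal' {G : Type*} [Group G] (p : ℕ) : ∀ n, (lam (G := G) p n).Normal
  | 0 => inferInstanceAs (⊤ : Subgroup G).Normal
  | 1 => inferInstanceAs (⊤ : Subgroup G).Normal
  | (n+2) => by
      haveI := lam_normal' (G := G) p (n+1)
      haveI := pPow_normal (lam (G := G) p (n+1)) p
      show (⁅(lam p (n+1) : Subgroup G), (⊤ : Subgroup G)⁆ ⊔ pPow (lam p (n+1)) p).Normal
      infer_instance

instance lam_normal {G : Type*} [Group G] (p n : ℕ) : (lam (G := G) p n).Normal :=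
  lam_normal' p n

/-- The union of all conjugates of the cyclic subgroup generated by `x`. -/
def conjClosure {G : Type*} [Group G] (x : G) : Set G :=
  ⋃ g : G, (fun h => g⁻¹ * h * g) '' (Subgroup.zpowers x : Set G)

/-- `Σ(x,y)`: the union of all conjugates of `⟨x⟩`, `⟨y⟩` and `⟨xy⟩`. -/
def SigmaSet {G : Type*} [Group G] (x y : G) : Set G :=
  conjClosure x ∪ conjClosure y ∪ conjClosure (x * y)

/-- `{x₁,y₁}` and `{x₂,y₂}` form a Beauville structure for `G`. -/
def IsBeauvilleStructure {G : Type*} [Group G] (x₁ y₁ x₂ y₂ : G) : Prop :=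
  Subgroup.closure {x₁, y₁} = ⊤ ∧ Subgroup.closure {x₂, y₂} = ⊤ ∧
    SigmaSet x₁ y₁ ∩ SigmaSet x₂ y₂ = {1}

/-- A Beauville group: a finite nontrivial (2-generated) group admitting a Beauville
structure. -/
def IsBeauvilleGroup (G : Type*) [Group G] : Prop :=
  Finite G ∧ Nontrivial G ∧ ∃ x₁ y₁ x₂ y₂ : G, IsBeauvilleStructure x₁ y₁ x₂ y₂


section AuxLemmas
open scoped commutatorElement
variable {G : Type*} [Group G]

/-- Key lemma: if every p-th power lies in the commutator subgroup, then
    x ∈ γ_{k+1} implies x^p ∈ γ_{k+2} (0-indexed). -/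
theorem pow_mem_succ (p : ℕ) (h1 : ∀ g : G, g ^ p ∈ commutator G) :
    ∀ k : ℕ, ∀ x ∈ (⊤ : Subgroup G).lowerCentralSeries k, x ^ p ∈ (⊤ : Subgroup G).lowerCentralSeries (k + 1) := by
  intro k
  induction k with
  | zero => intro x _; exact h1 x
  | succ k ih =>
    intro x hx
    set L1 := (⊤ : Subgroup G).lowerCentralSeries (k + 1)
    set L2 := (⊤ : Subgroup G).lowerCentralSeries (k + 2)
    let Q := G ⧸ L2
    let π : G →* Q := QuotientGroup.mk' L2
    -- image of L1 is central in Q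
    have hcent : ∀ b ∈ L1, π b ∈ Subgroup.center Q := by
      intro b hb
      rw [Subgroup.mem_center_iff]
      intro q
      obtain ⟨g, rfl⟩ := QuotientGroup.mk'_surjective L2 q
      have hc : ⁅b, g⁆ ∈ L2 := by
        have : L2 = ⁅L1, (⊤ : Subgroup G)⁆ := rfl
        rw [this]
        exact Subgroup.commutator_mem_commutator hb (Subgroup.mem_top g)
      have : π ⁅b, g⁆ = 1 := (QuotientGroup.eq_one_iff _).mpr hc
      rw [map_commutatorElement] at this
      have := commutatorElement_eq_one_iff_mul_comm.mp this
      rw [this]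
    -- commutator power identity
    have hcommpow : ∀ a ∈ (⊤ : Subgroup G).lowerCentralSeries k, ∀ g : G, ∀ m : ℕ,
        π ⁅a ^ m, g⁆ = (π ⁅a, g⁆) ^ m := by
      intro a ha g m
      induction m with
      | zero => simp
      | succ m ihm =>
        have hmem : ∀ n : ℕ, ⁅a ^ n, g⁆ ∈ L1 := by
          intro n
          have : L1 = ⁅(⊤ : Subgroup G).lowerCentralSeries k, (⊤ : Subgroup G)⁆ := rfl
          rw [this]
          exact Subgroup.commutator_mem_commutator (pow_mem ha n) (Subgroup.mem_top g)
        have key : ⁅a ^ (m + 1), g⁆ = a * ⁅a ^ m, g⁆ * a⁻¹ * ⁅a, g⁆ := by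
          rw [pow_succ' a m]
          simp only [commutatorElement_def]
          group
        rw [key]
        simp only [map_mul, map_inv]
        have hc := hcent _ (hmem m)
        rw [Subgroup.mem_center_iff] at hc
        rw [hc (π a), mul_inv_cancel_right, ihm, ← pow_succ]
    -- the subgroup of central elements of order dividing p
    let K : Subgroup Q :=
      { carrier := {z | z ∈ Subgroup.center Q ∧ z ^ p = 1}
        one_mem' := ⟨Subgroup.one_mem _, one_pow p⟩
        mul_mem' := by
          rintro z w ⟨hz, hzp⟩ ⟨hw, hwp⟩
          refine ⟨Subgroup.mul_mem _ hz hw, ?_⟩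
          have hcomm : Commute z w := (Subgroup.mem_center_iff.mp hz w).symm
          rw [hcomm.mul_pow, hzp, hwp, one_mul]
        inv_mem' := by
          rintro z ⟨hz, hzp⟩
          exact ⟨Subgroup.inv_mem _ hz, by rw [inv_pow, hzp, inv_one]⟩ }
    have hmapK : Subgroup.map π L1 ≤ K := by
      have : L1 = Subgroup.closure { y | ∃ a ∈ (⊤ : Subgroup G).lowerCentralSeries k,
          ∃ g ∈ (⊤ : Subgroup G), a * g * a⁻¹ * g⁻¹ = y } := rfl
      rw [this, MonoidHom.map_closure, Subgroup.closure_le]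
      rintro _ ⟨y, ⟨a, ha, g, -, rfl⟩, rfl⟩
      have hy : a * g * a⁻¹ * g⁻¹ = ⁅a, g⁆ := rfl
      rw [hy]
      constructor
      · exact hcent _ (by
          have : L1 = ⁅(⊤ : Subgroup G).lowerCentralSeries k, (⊤ : Subgroup G)⁆ := rfl
          rw [this]
          exact Subgroup.commutator_mem_commutator ha (Subgroup.mem_top g))
      · rw [← hcommpow a ha g p]
        refine (QuotientGroup.eq_one_iff _).mpr ?_
        have hap : a ^ p ∈ L1 := ih a ha
        have : L2 = ⁅L1, (⊤ : Subgroup G)⁆ := rfl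
        rw [this]
        exact Subgroup.commutator_mem_commutator hap (Subgroup.mem_top g)
    have : π x ∈ K := hmapK ⟨x, hx, rfl⟩
    have hxp : π (x ^ p) = 1 := by rw [map_pow]; exact this.2
    exact (QuotientGroup.eq_one_iff _).mp hxp

theorem pPow_lcs_le (p : ℕ) (h1 : ∀ g : G, g ^ p ∈ commutator G) :
    ∀ k j : ℕ, pPow ((⊤ : Subgroup G).lowerCentralSeries k) (p ^ j) ≤ (⊤ : Subgroup G).lowerCentralSeries (k + j) := by
  intro k j
  induction j with
  | zero =>
    rw [pPow, Subgroup.closure_le]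
    rintro _ ⟨h, hh, rfl⟩
    simpa using hh
  | succ j ihj =>
    rw [pPow, Subgroup.closure_le]
    rintro _ ⟨h, hh, rfl⟩
    have heq : h ^ p ^ (j + 1) = (h ^ p ^ j) ^ p := by
      rw [← pow_mul, pow_succ]
    have hmem : h ^ p ^ j ∈ (⊤ : Subgroup G).lowerCentralSeries (k + j) :=
      ihj (Subgroup.subset_closure ⟨h, hh, rfl⟩)
    have := pow_mem_succ p h1 (k + j) _ hmem
    rw [heq]
    exact this

theorem lam_eq_lcs (p : ℕ) (h1 : ∀ g : G, g ^ p ∈ commutator G) :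
    ∀ n : ℕ, lam (G := G) p (n + 1) = (⊤ : Subgroup G).lowerCentralSeries n := by
  intro n
  induction n with
  | zero => rfl
  | succ n ihn =>
    have hdef : lam (G := G) p (n + 2) =
        ⁅(lam (G := G) p (n+1) : Subgroup G), (⊤ : Subgroup G)⁆ ⊔ pPow (lam (G := G) p (n+1)) p := rfl
    rw [hdef, ihn]
    have h2 : pPow ((⊤ : Subgroup G).lowerCentralSeries n) p ≤ (⊤ : Subgroup G).lowerCentralSeries (n + 1) := by
      have := pPow_lcs_le p h1 n 1
      rwa [pow_one] at this
    have h3 : ⁅(⊤ : Subgroup G).lowerCentralSeries n, (⊤ : Subgroup G)⁆ = (⊤ : Subgroup G).lowerCentralSeries (n + 1) := rfl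
    rw [h3]
    exact sup_eq_left.mpr h2

end AuxLemmas

/-- If `G/[G,G]` has exponent `p`, then `γ_i(G)^(p^j) ≤ γ_{i+j}(G)` for all `i, j ≥ 1`;
consequently the `p`-central series coincides with the lower central series:
`λ_n(G) = γ_n(G)` for all `n ≥ 1`.  (Here `γ_i(G) = (⊤ : Subgroup G).lowerCentralSeries (i-1)`.) -/
theorem statement_0 {G : Type*} [Group G] (p : ℕ) (hp : p.Prime)
    (hexp : Monoid.exponent (G ⧸ commutator G) = p) :
    (∀ i j : ℕ, 1 ≤ i → 1 ≤ j →
        pPow ((⊤ : Subgroup G).lowerCentralSeries (i - 1)) (p ^ j) ≤ (⊤ : Subgroup G).lowerCentralSeries (i + j - 1)) ∧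
    (∀ n : ℕ, 1 ≤ n → lam (G := G) p n = (⊤ : Subgroup G).lowerCentralSeries (n - 1)) := by
  have h1 : ∀ g : G, g ^ p ∈ commutator G := by
    intro g
    have h := Monoid.pow_exponent_eq_one (QuotientGroup.mk g : G ⧸ commutator G)
    rw [hexp] at h
    have h' : ((g ^ p : G) : G ⧸ commutator G) = 1 := by
      rw [← h]; rfl
    exact (QuotientGroup.eq_one_iff _).mp h'
  constructor
  · intro i j hi hj
    have heq : i + j - 1 = (i - 1) + j := by omega
    rw [heq]
    exact pPow_lcs_le p h1 (i - 1) j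
  · intro n hn
    obtain ⟨m, rfl⟩ : ∃ m, n = m + 1 := ⟨n - 1, by omega⟩
    simpa using lam_eq_lcs p h1 m
end

section
/- Let G be a group, p a prime, n ≥ 3, x ∈ G and y ∈ λ_2(G). Then (xy)^(p^(n-2)) ≡ x^(p^(n-2)) modulo λ_n(G). -/
open scoped commutatorElement

lemma key_step {G : Type*} [Group G] (p m : ℕ) (hm : 1 ≤ m) (x z : G)
    (hz : z ∈ lam (G := G) p m) :
    (x ^ p)⁻¹ * (x * z) ^ p ∈ lam (G := G) p (m + 1) := by
  obtain ⟨j, rfl⟩ : ∃ j, m = j + 1 := ⟨m - 1, (Nat.succ_pred_eq_of_pos hm).symm⟩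
  set N : Subgroup G := lam p (j + 2) with hN
  haveI : N.Normal := lam_normal p (j + 2)
  have hcomm : ⁅(lam (G := G) p (j+1) : Subgroup G), (⊤ : Subgroup G)⁆ ≤ N := by
    rw [hN]; show _ ≤ ⁅(lam p (j+1) : Subgroup G), (⊤ : Subgroup G)⁆ ⊔ pPow (lam p (j+1)) p
    exact le_sup_left
  have hpow : pPow (lam (G := G) p (j+1)) p ≤ N := by
    rw [hN]; show _ ≤ ⁅(lam p (j+1) : Subgroup G), (⊤ : Subgroup G)⁆ ⊔ pPow (lam p (j+1)) p
    exact le_sup_right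
  rw [← QuotientGroup.eq_one_iff (N := N)]
  simp only [QuotientGroup.mk_mul, QuotientGroup.mk_inv, QuotientGroup.mk_pow]
  have hc : Commute ((x : G ⧸ N)) ((z : G ⧸ N)) := by
    show ((x : G ⧸ N)) * z = z * x
    rw [← QuotientGroup.mk_mul, ← QuotientGroup.mk_mul, QuotientGroup.eq]
    have : (x * z)⁻¹ * (z * x) = ⁅z⁻¹, x⁻¹⁆ := by
      simp [commutatorElement_def]; group
    rw [this]
    exact hcomm (Subgroup.commutator_mem_commutator (inv_mem hz) (Subgroup.mem_top _))
  rw [hc.mul_pow]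
  have hz1 : ((z : G ⧸ N)) ^ p = 1 := by
    rw [← QuotientGroup.mk_pow, QuotientGroup.eq_one_iff]
    exact hpow (Subgroup.subset_closure ⟨z, hz, rfl⟩)
  rw [hz1, mul_one, inv_mul_cancel]

lemma key_iter {G : Type*} [Group G] (p : ℕ) (k : ℕ) :
    ∀ m, 1 ≤ m → ∀ x z : G, z ∈ lam (G := G) p m →
      (x ^ p ^ k)⁻¹ * (x * z) ^ p ^ k ∈ lam (G := G) p (m + k) := by
  induction k with
  | zero =>
      intro m hm x z hz
      simpa using hz
  | succ k ih =>
      intro m hm x z hz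
      have hw := key_step p m hm x z hz
      set w := (x ^ p)⁻¹ * (x * z) ^ p with hwdef
      have hxz : (x * z) ^ p = x ^ p * w := by rw [hwdef]; group
      have := ih (m + 1) (by omega) (x ^ p) w hw
      rw [← hxz, ← pow_mul, ← pow_succ'] at this
      have hrw : (x * z) ^ p ^ (k + 1) = ((x * z) ^ p) ^ p ^ k := by
        rw [← pow_mul, ← pow_succ']
      rw [hrw]
      rwa [show m + (k + 1) = m + 1 + k by omega]

/-- For `n ≥ 3`, `x ∈ G` and `y ∈ λ₂(G)`: `(xy)^(p^(n-2)) ≡ x^(p^(n-2))  (mod λ_n(G))`. -/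
theorem statement_2 {G : Type*} [Group G] (p : ℕ) (hp : p.Prime) (n : ℕ) (hn : 3 ≤ n)
    (x y : G) (hy : y ∈ lam (G := G) p 2) :
    (x ^ p ^ (n - 2))⁻¹ * (x * y) ^ p ^ (n - 2) ∈ lam (G := G) p n := by
  have h := key_iter p (n - 2) 2 (by norm_num) x y hy
  rwa [show 2 + (n - 2) = n by omega] at h
end

section
/- Let F be the free group on two generators x and y, p a prime, and n ≥ 2. Then the images of x^(p^(n-2)) and y^(p^(n-2)) in F/λ_n(F) generate a subgroup isomorphic to C_p × C_p; in particular they are linearly independent modulo λ_n(F). -/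
open scoped commutatorElement
section Helpers

variable {G : Type*} [Group G]

lemma lam_succ_succ (p k : ℕ) :
    (lam (G := G) p (k+2)) =
      ⁅(lam p (k+1) : Subgroup G), (⊤ : Subgroup G)⁆ ⊔ pPow (lam p (k+1)) p := rfl

lemma lam_one (p : ℕ) : (lam (G := G) p 1) = ⊤ := rfl

lemma pow_pow_mem_lam (p k : ℕ) (g : G) : g ^ p ^ k ∈ lam (G := G) p (k+1) := by
  induction k with
  | zero => rw [lam_one]; exact Subgroup.mem_top _
  | succ k ih =>
      have h : g ^ p ^ (k+1) = (g ^ p ^ k) ^ p := by rw [← pow_mul, pow_succ]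
      rw [h, lam_succ_succ]
      exact Subgroup.mem_sup_right (Subgroup.subset_closure ⟨_, ih, rfl⟩)

lemma commutator_mem_lam (p k : ℕ) {g : G} (h : G) (hg : g ∈ lam p (k+1)) :
    ⁅g, h⁆ ∈ lam (G := G) p (k+2) := by
  rw [lam_succ_succ]
  exact Subgroup.mem_sup_left (Subgroup.commutator_mem_commutator hg (Subgroup.mem_top h))

lemma pPow_top_comm {C : Type*} [CommGroup C] (k : ℕ) :
    pPow (⊤ : Subgroup C) k = (powMonoidHom k : C →* C).range := by
  apply le_antisymm
  · rw [pPow, Subgroup.closure_le]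
    rintro x ⟨h, -, rfl⟩
    exact ⟨h, rfl⟩
  · rintro x ⟨h, rfl⟩
    exact Subgroup.subset_closure ⟨h, trivial, rfl⟩

lemma lam_map_le {C : Type*} [CommGroup C] (p : ℕ) (φ : G →* C) :
    ∀ k, lam p (k+1) ≤ Subgroup.comap φ (pPow (⊤ : Subgroup C) (p ^ k))
  | 0 => by
      intro g _
      rw [Subgroup.mem_comap, pPow_top_comm]
      exact ⟨φ g, by simp [powMonoidHom]⟩
  | (k+1) => by
      rw [lam_succ_succ]
      apply sup_le
      · rw [Subgroup.commutator_le]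
        intro g _ h _
        rw [Subgroup.mem_comap, map_commutatorElement, commutatorElement_eq_one_iff_commute.mpr (Commute.all _ _)]
        exact Subgroup.one_mem _
      · rw [pPow, Subgroup.closure_le]
        rintro x ⟨h, hh, rfl⟩
        have hk := lam_map_le p φ k hh
        rw [Subgroup.mem_comap, pPow_top_comm] at hk
        obtain ⟨u, hu⟩ := hk
        rw [SetLike.mem_coe, Subgroup.mem_comap, pPow_top_comm]
        refine ⟨u, ?_⟩
        simp only [powMonoidHom_apply] at hu ⊢
        rw [map_pow, ← hu, ← pow_mul, ← pow_succ]

end Helpers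
/-- Hom from `Multiplicative (ZMod p)` determined by an element whose `p`-th power is 1. -/
def zmodHom {Q : Type*} [Group Q] (p : ℕ) (a : Q) (ha : a ^ p = 1) :
    Multiplicative (ZMod p) →* Q :=
  AddMonoidHom.toMultiplicativeLeft
    (ZMod.lift p ⟨zmultiplesHom (Additive Q) (Additive.ofMul a), by
      show ((p : ℤ) • Additive.ofMul a) = 0
      rw [← ofMul_zpow, zpow_natCast, ha]
      rfl⟩)

lemma zmodHom_apply {Q : Type*} [Group Q] (p : ℕ) (a : Q) (ha : a ^ p = 1) (i : ℤ) :
    zmodHom p a ha (Multiplicative.ofAdd ((i : ZMod p))) = a ^ i := by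
  unfold zmodHom
  rw [AddMonoidHom.coe_toMultiplicativeLeft]
  simp only [Function.comp_apply, toAdd_ofAdd, ZMod.lift_coe, zmultiplesHom_apply,
    ← ofMul_zpow]
  rfl

lemma mult_zmod_eq (p : ℕ) [NeZero p] (u : Multiplicative (ZMod p)) :
    u = Multiplicative.ofAdd (((Multiplicative.toAdd u).val : ℤ) : ZMod p) := by
  rw [Int.cast_natCast, ZMod.natCast_val, ZMod.cast_id]
  rfl

set_option maxHeartbeats 2000000 in
/-- In `F/λ_n(F)` (`F` free of rank 2, `n ≥ 2`), the images of `x^(p^(n-2))` and `y^(p^(n-2))`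
generate a subgroup isomorphic to `C_p × C_p`; in particular they are linearly independent
modulo `λ_n(F)`. -/
theorem statement_3 (p n : ℕ) (hp : p.Prime) (hn : 2 ≤ n) :
    let F := FreeGroup (Fin 2)
    let a : F ⧸ lam p n := QuotientGroup.mk (FreeGroup.of 0 ^ p ^ (n - 2))
    let b : F ⧸ lam p n := QuotientGroup.mk (FreeGroup.of 1 ^ p ^ (n - 2))
    Nonempty ((Subgroup.closure {a, b}) ≃*
        (Multiplicative (ZMod p) × Multiplicative (ZMod p))) ∧
      ∀ i j : ℤ, a ^ i * b ^ j = 1 → a ^ i = 1 ∧ b ^ j = 1 := by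
  obtain ⟨m, rfl⟩ : ∃ m, n = m + 2 := ⟨n - 2, by omega⟩
  intro F a b
  haveI : NeZero p := ⟨hp.ne_zero⟩
  set q : ℕ := p ^ (m + 1) with hq
  -- the exponent-sum homomorphism to `(ZMod q)²`
  set φ : FreeGroup (Fin 2) →* Multiplicative (ZMod q × ZMod q) :=
    FreeGroup.lift (fun i => Multiplicative.ofAdd
      (if i = 0 then ((1 : ZMod q), (0 : ZMod q)) else (0, 1))) with hφ
  have hexp : ∀ u : Multiplicative (ZMod q × ZMod q), u ^ q = 1 := by
    intro u
    have h1 : q • (Multiplicative.toAdd u) = 0 := by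
      have : ∀ x : ZMod q, q • x = 0 := fun x => by
        rw [nsmul_eq_mul, ZMod.natCast_self, zero_mul]
      exact Prod.ext (this _) (this _)
    rw [← ofAdd_toAdd u, ← ofAdd_nsmul, h1]
    rfl
  have hker : lam p (m + 2) ≤ φ.ker := by
    intro g hg
    have h1 := lam_map_le p φ (m + 1) hg
    rw [Subgroup.mem_comap, pPow_top_comm] at h1
    obtain ⟨u, hu⟩ := h1
    rw [MonoidHom.mem_ker, ← hu, powMonoidHom_apply]
    exact hexp u
  set ψ : (F ⧸ lam p (m + 2)) →* Multiplicative (ZMod q × ZMod q) :=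
    QuotientGroup.lift (lam p (m + 2)) φ hker with hψ
  have hψa : ψ a = Multiplicative.ofAdd (((p ^ m : ℕ) : ZMod q), 0) := by
    show φ (FreeGroup.of 0 ^ p ^ m) = _
    rw [map_pow, hφ, FreeGroup.lift_apply_of, if_pos rfl, ← ofAdd_nsmul]
    congr 1
    ext <;> simp [nsmul_eq_mul]
  have hψb : ψ b = Multiplicative.ofAdd (0, ((p ^ m : ℕ) : ZMod q)) := by
    show φ (FreeGroup.of 1 ^ p ^ m) = _
    rw [map_pow, hφ, FreeGroup.lift_apply_of, if_neg (by decide), ← ofAdd_nsmul]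
    congr 1
    ext <;> simp [nsmul_eq_mul]
  have hpZ : ((p : ℤ)) ^ m ≠ 0 := pow_ne_zero _ (by exact_mod_cast hp.ne_zero)
  -- the key independence statement
  have key : ∀ i j : ℤ, a ^ i * b ^ j = 1 → (p : ℤ) ∣ i ∧ (p : ℤ) ∣ j := by
    intro i j hij
    have h1 : ψ (a ^ i) * ψ (b ^ j) = 1 := by rw [← map_mul, hij, map_one]
    rw [map_zpow, map_zpow, hψa, hψb, ← ofAdd_zsmul, ← ofAdd_zsmul, ← ofAdd_add] at h1
    have h2 : i • ((((p ^ m : ℕ) : ZMod q)), (0 : ZMod q))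
        + j • ((0 : ZMod q), (((p ^ m : ℕ) : ZMod q))) = 0 := by
      have := congrArg Multiplicative.toAdd h1
      simpa using this
    rw [Prod.ext_iff] at h2
    obtain ⟨h2a, h2b⟩ := h2
    simp only [Prod.fst_add, Prod.snd_add, Prod.smul_fst, Prod.smul_snd, smul_zero,
      add_zero, zero_add] at h2a h2b
    have hstep : ∀ i : ℤ, i • (((p ^ m : ℕ) : ZMod q)) = 0 → (p : ℤ) ∣ i := by
      intro i hi
      have h3 : ((i * (p : ℤ) ^ m : ℤ) : ZMod q) = 0 := by
        push_cast
        rw [← zsmul_eq_mul]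
        convert hi using 2
        push_cast
        ring
      rw [ZMod.intCast_zmod_eq_zero_iff_dvd, hq] at h3
      push_cast at h3
      rw [pow_succ, mul_comm i] at h3
      have h4 := (mul_dvd_mul_iff_left hpZ).mp h3
      exact h4
    exact ⟨hstep i h2a, hstep j h2b⟩
  -- `a` and `b` have order dividing `p`
  have hap : a ^ p = 1 := by
    show (QuotientGroup.mk (FreeGroup.of 0 ^ p ^ m) : F ⧸ lam p (m+2)) ^ p = 1
    rw [← QuotientGroup.mk_pow, QuotientGroup.eq_one_iff, ← pow_mul, ← pow_succ]
    exact pow_pow_mem_lam p (m + 1) _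
  have hbp : b ^ p = 1 := by
    show (QuotientGroup.mk (FreeGroup.of 1 ^ p ^ m) : F ⧸ lam p (m+2)) ^ p = 1
    rw [← QuotientGroup.mk_pow, QuotientGroup.eq_one_iff, ← pow_mul, ← pow_succ]
    exact pow_pow_mem_lam p (m + 1) _
  -- `a` and `b` commute
  have hcomm : Commute a b := by
    rw [← commutatorElement_eq_one_iff_commute]
    have heq : (⁅a, b⁆ : F ⧸ lam p (m + 2)) =
        QuotientGroup.mk ⁅(FreeGroup.of (0 : Fin 2) : F) ^ p ^ m,
          (FreeGroup.of (1 : Fin 2) : F) ^ p ^ m⁆ :=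
      (map_commutatorElement (QuotientGroup.mk' (lam p (m + 2))) _ _).symm
    rw [heq, QuotientGroup.eq_one_iff]
    exact commutator_mem_lam p m _ (pow_pow_mem_lam p m _)
  -- second conjunct
  have indep : ∀ i j : ℤ, a ^ i * b ^ j = 1 → a ^ i = 1 ∧ b ^ j = 1 := by
    intro i j hij
    obtain ⟨⟨c, rfl⟩, ⟨d, rfl⟩⟩ := key i j hij
    constructor
    · rw [zpow_mul, zpow_natCast, hap, one_zpow]
    · rw [zpow_mul, zpow_natCast, hbp, one_zpow]
  refine ⟨?_, indep⟩
  -- build the homomorphism from `C_p × C_p`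
  set χ₁ := zmodHom p a hap with hχ₁
  set χ₂ := zmodHom p b hbp with hχ₂
  have hform₁ : ∀ u : Multiplicative (ZMod p), ∃ i : ℤ, χ₁ u = a ^ i ∧
      u = Multiplicative.ofAdd ((i : ZMod p)) := by
    intro u
    refine ⟨((Multiplicative.toAdd u).val : ℤ), ?_, mult_zmod_eq p u⟩
    conv_lhs => rw [mult_zmod_eq p u]
    exact zmodHom_apply p a hap _
  have hform₂ : ∀ u : Multiplicative (ZMod p), ∃ i : ℤ, χ₂ u = b ^ i ∧
      u = Multiplicative.ofAdd ((i : ZMod p)) := by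
    intro u
    refine ⟨((Multiplicative.toAdd u).val : ℤ), ?_, mult_zmod_eq p u⟩
    conv_lhs => rw [mult_zmod_eq p u]
    exact zmodHom_apply p b hbp _
  have hcommχ : ∀ u v, Commute (χ₁ u) (χ₂ v) := by
    intro u v
    obtain ⟨i, hi, -⟩ := hform₁ u
    obtain ⟨j, hj, -⟩ := hform₂ v
    rw [hi, hj]
    exact hcomm.zpow_zpow i j
  set χ : Multiplicative (ZMod p) × Multiplicative (ZMod p) →* F ⧸ lam p (m + 2) :=
    χ₁.noncommCoprod χ₂ hcommχ with hχ
  have hinj : Function.Injective χ := by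
    rw [injective_iff_map_eq_one]
    rintro ⟨u, v⟩ huv
    obtain ⟨i, hi, hu⟩ := hform₁ u
    obtain ⟨j, hj, hv⟩ := hform₂ v
    rw [MonoidHom.noncommCoprod_apply, hi, hj] at huv
    obtain ⟨hdi, hdj⟩ := key i j huv
    have hiz : ((i : ZMod p)) = 0 := (ZMod.intCast_zmod_eq_zero_iff_dvd i p).mpr hdi
    have hjz : ((j : ZMod p)) = 0 := (ZMod.intCast_zmod_eq_zero_iff_dvd j p).mpr hdj
    rw [hu, hv, hiz, hjz]
    rfl
  have hrange : χ.range = Subgroup.closure {a, b} := by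
    apply le_antisymm
    · rintro x ⟨⟨u, v⟩, rfl⟩
      obtain ⟨i, hi, -⟩ := hform₁ u
      obtain ⟨j, hj, -⟩ := hform₂ v
      rw [MonoidHom.noncommCoprod_apply, hi, hj]
      have ha' : a ∈ Subgroup.closure {a, b} :=
        Subgroup.subset_closure (Set.mem_insert _ _)
      have hb' : b ∈ Subgroup.closure {a, b} :=
        Subgroup.subset_closure (Set.mem_insert_of_mem _ rfl)
      exact mul_mem (zpow_mem ha' i) (zpow_mem hb' j)
    · rw [Subgroup.closure_le]
      rintro x (rfl | rfl)
      · refine ⟨(Multiplicative.ofAdd ((1 : ZMod p)), 1), ?_⟩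
        rw [MonoidHom.noncommCoprod_apply]
        have h1 : ((1 : ZMod p)) = (((1 : ℤ)) : ZMod p) := by norm_num
        rw [h1, hχ₁, zmodHom_apply, zpow_one, map_one χ₂, mul_one]
      · refine ⟨(1, Multiplicative.ofAdd ((1 : ZMod p))), ?_⟩
        rw [MonoidHom.noncommCoprod_apply]
        have h1 : ((1 : ZMod p)) = (((1 : ℤ)) : ZMod p) := by norm_num
        rw [h1, hχ₂, zmodHom_apply, zpow_one, map_one χ₁, one_mul]
  exact ⟨(MulEquiv.subgroupCongr hrange.symm).trans (MonoidHom.ofInjective hinj).symm⟩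
end

section
/- Let F be the free group on two generators, p a prime, and n ≥ 2. Then the images of the two free generators in the quotient F/λ_n(F) each have order exactly p^(n-1). -/
theorem pPow_mono {G : Type*} [Group G] {H K : Subgroup G} (h : H ≤ K) (m : ℕ) :
    pPow H m ≤ pPow K m := by
  apply Subgroup.closure_mono
  rintro x ⟨a, ha, rfl⟩
  exact ⟨a, h ha, rfl⟩

theorem pow_mem_lam {G : Type*} [Group G] (p : ℕ) :
    ∀ n, 1 ≤ n → ∀ x : G, x ^ (p ^ (n - 1)) ∈ lam (G := G) p n
  | 1, _, x => by simp [lam]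
  | (m+2), _, x => by
    have ih := pow_mem_lam (G := G) p (m+1) (by omega) x
    have : x ^ (p ^ (m + 2 - 1)) = (x ^ (p ^ m)) ^ p := by
      rw [← pow_mul, ← pow_succ]
      norm_num
    rw [this]
    show _ ∈ ⁅(lam p (m+1) : Subgroup G), (⊤ : Subgroup G)⁆ ⊔ pPow (lam p (m+1)) p
    have hmem : (x ^ (p ^ m)) ^ p ∈ pPow (lam (G := G) p (m+1)) p :=
      Subgroup.subset_closure ⟨x ^ (p ^ m), by simpa using ih, rfl⟩
    exact (le_sup_right : pPow (lam (G := G) p (m+1)) p ≤ _) hmem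

theorem lam_map_le_s4 {G H : Type*} [Group G] [Group H] (f : G →* H) (p : ℕ) :
    ∀ n, (lam (G := G) p n).map f ≤ lam (G := H) p n
  | 0 => le_top
  | 1 => le_top
  | (m+2) => by
    have ih := lam_map_le_s4 f p (m+1)
    show ((⁅(lam p (m+1) : Subgroup G), (⊤ : Subgroup G)⁆ ⊔ pPow (lam p (m+1)) p).map f) ≤
      ⁅(lam p (m+1) : Subgroup H), (⊤ : Subgroup H)⁆ ⊔ pPow (lam p (m+1)) p
    rw [Subgroup.map_sup]
    apply sup_le
    · rw [Subgroup.map_commutator]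
      exact le_sup_left.trans' (Subgroup.commutator_mono ih le_top)
    · refine le_sup_right.trans' ?_
      rw [pPow, MonoidHom.map_closure]
      apply Subgroup.closure_le _ |>.mpr
      rintro y ⟨x, ⟨a, ha, rfl⟩, rfl⟩
      exact Subgroup.subset_closure ⟨f a, ih ⟨a, ha, rfl⟩, map_pow f a p⟩

open scoped commutatorElement in
theorem lam_le_pow_range {G : Type*} [CommGroup G] (p : ℕ) :
    ∀ n, 1 ≤ n → lam (G := G) p n ≤ (powMonoidHom (p ^ (n-1)) : G →* G).range
  | 1, _ => by
    intro x _
    exact ⟨x, by simp [powMonoidHom]⟩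
  | (m+2), _ => by
    have ih := lam_le_pow_range (G := G) p (m+1) (by omega)
    show (⁅(lam p (m+1) : Subgroup G), (⊤ : Subgroup G)⁆ ⊔ pPow (lam p (m+1)) p) ≤ _
    apply sup_le
    · rw [Subgroup.commutator_le]
      intro g _ h _
      have : ⁅g, h⁆ = 1 := by
        rw [commutatorElement_def]
        group
        rw [mul_comm g h]
        group
      rw [this]; exact one_mem _
    · apply Subgroup.closure_le _ |>.mpr
      rintro x ⟨a, ha, rfl⟩
      obtain ⟨y, hy⟩ := ih ha
      refine ⟨y, ?_⟩
      simp only [powMonoidHom_apply] at hy ⊢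
      rw [← hy, ← pow_mul, ← pow_succ]
      norm_num

theorem lam_eq_bot_mult_zmod (p n : ℕ) (hp : p.Prime) (hn : 1 ≤ n) :
    lam (G := Multiplicative (ZMod (p ^ (n-1)))) p n = ⊥ := by
  apply le_bot_iff.mp
  refine (lam_le_pow_range p n hn).trans ?_
  rintro x ⟨y, rfl⟩
  simp only [powMonoidHom_apply, Subgroup.mem_bot]
  have : (p ^ (n-1) : ℕ) • y.toAdd = 0 := by
    rw [nsmul_eq_mul]
    simp [ZMod.natCast_self]
  rw [← ofAdd_toAdd (y ^ (p ^ (n-1)))]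
  simp [toAdd_pow, this]

theorem order_aux (p n : ℕ) (hp : p.Prime) (hn : 2 ≤ n) (i : Fin 2) :
    orderOf (QuotientGroup.mk (FreeGroup.of i) : FreeGroup (Fin 2) ⧸ lam p n) = p ^ (n - 1) := by
  set N := p ^ (n - 1) with hN
  haveI : NeZero N := ⟨pow_ne_zero _ hp.pos.ne'⟩
  set G := Multiplicative (ZMod N)
  set f : FreeGroup (Fin 2) →* G :=
    FreeGroup.lift (fun j => if j = i then Multiplicative.ofAdd (1 : ZMod N) else 1) with hf
  have hker : lam p n ≤ f.ker := by
    intro x hx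
    have h1 : f x ∈ (lam (G := FreeGroup (Fin 2)) p n).map f := ⟨x, hx, rfl⟩
    have h2 := lam_map_le_s4 f p n h1
    rw [lam_eq_bot_mult_zmod p n hp (by omega)] at h2
    exact h2
  set φ := QuotientGroup.lift (lam p n) f hker with hφ
  have hφx : φ (QuotientGroup.mk (FreeGroup.of i)) = Multiplicative.ofAdd (1 : ZMod N) := by
    simp [hφ, hf]
  apply Nat.dvd_antisymm
  · apply orderOf_dvd_of_pow_eq_one
    rw [← QuotientGroup.mk_pow]
    rw [QuotientGroup.eq_one_iff]
    exact pow_mem_lam p n (by omega) _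
  · have h1 : orderOf (φ (QuotientGroup.mk (FreeGroup.of i) :
        FreeGroup (Fin 2) ⧸ lam p n)) ∣ orderOf (QuotientGroup.mk (FreeGroup.of i) :
        FreeGroup (Fin 2) ⧸ lam p n) := orderOf_map_dvd φ _
    rwa [hφx, orderOf_ofAdd_eq_addOrderOf, ZMod.addOrderOf_one] at h1

/-- In `F/λ_n(F)` (`F` free of rank 2, `n ≥ 2`), the images of the two free generators
each have order exactly `p^(n-1)`. -/
theorem statement_4 (p n : ℕ) (hp : p.Prime) (hn : 2 ≤ n) :
    orderOf (QuotientGroup.mk (FreeGroup.of 0) : FreeGroup (Fin 2) ⧸ lam p n) = p ^ (n - 1) ∧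
    orderOf (QuotientGroup.mk (FreeGroup.of 1) : FreeGroup (Fin 2) ⧸ lam p n) = p ^ (n - 1) :=
  ⟨order_aux p n hp hn 0, order_aux p n hp hn 1⟩
end

section
/- Let p be a prime and G a finite p-group of order p^n with d(G) = 2 (G is 2-generated) which is not of maximal class. Then for every x ∈ G there exists t ∈ Φ(G) such that t is not of the form [x, g] for any g ∈ G. -/
open Subgroup

universe u

/-- For a finite group hom, `|A| = |range| * |ker|`. -/
private lemma aux_card_hom {A : Type*} {B : Type*} [Group A] [Group B] [Finite A] (φ : A →* B) :
    Nat.card A = Nat.card φ.range * Nat.card φ.ker := by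
  rw [Subgroup.card_eq_card_quotient_mul_card_subgroup φ.ker]
  congr 1
  exact Nat.card_congr (QuotientGroup.quotientKerEquivRange φ).toEquiv

/-- Key lemma: a group of order `p ^ n` (`n ≥ 2`) having an element whose centralizer has
cardinality at most `p ^ 2` has nilpotency class exactly `n - 1`. -/
private lemma key_lemma (p : ℕ) (hp : p.Prime) :
    ∀ n : ℕ, ∀ (G : Type u) [Group G] [Finite G] [Group.IsNilpotent G],
      2 ≤ n → Nat.card G = p ^ n →
      ∀ x : G, Nat.card (Subgroup.centralizer ({x} : Set G)) ≤ p ^ 2 →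
      Group.nilpotencyClass G = n - 1 := by
  intro n
  induction n using Nat.strong_induction_on with
  | _ n ih =>
  intro G _ _ _ hn2 hcard x hcx
  haveI : Fact p.Prime := ⟨hp⟩
  have hp1 : 1 < p := hp.one_lt
  have hpG : IsPGroup p G := IsPGroup.of_card hcard
  haveI : Group.IsNilpotent G := hpG.isNilpotent
  haveI : Nontrivial G := by
    rw [← Finite.one_lt_card_iff_nontrivial, hcard]
    exact Nat.one_lt_pow (by omega) hp1
  rcases eq_or_lt_of_le hn2 with heq | h3
  · -- base case : n = 2
    have hcomm := IsPGroup.commutative_of_card_eq_prime_sq (p := p) (heq ▸ hcard)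
    have hcen : Subgroup.center G = ⊤ := by
      rw [eq_top_iff]
      exact fun g _ => Subgroup.mem_center_iff.mpr fun h => hcomm h g
    have hle : Group.nilpotencyClass G ≤ 1 := by
      rw [← _root_.upperCentralSeries_eq_top_iff_nilpotencyClass_le, _root_.upperCentralSeries_one]
      exact hcen
    have hne : Group.nilpotencyClass G ≠ 0 := by
      intro h
      haveI := nilpotencyClass_zero_iff_subsingleton.mp h
      exact false_of_nontrivial_of_subsingleton G
    omega
  · -- inductive step : 2 < n
    obtain ⟨k, hk0, hkcard⟩ := IsPGroup.card_center_eq_prime_pow hcard (by omega)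
    have hcenle : Subgroup.center G ≤ Subgroup.centralizer ({x} : Set G) :=
      Subgroup.center_le_centralizer {x}
    have hxx : x ∈ Subgroup.centralizer ({x} : Set G) :=
      Subgroup.mem_centralizer_singleton_iff.mpr rfl
    have hxnc : x ∉ Subgroup.center G := by
      intro hx
      have htop : Subgroup.centralizer ({x} : Set G) = ⊤ := by
        rw [eq_top_iff]
        intro g _
        exact Subgroup.mem_centralizer_singleton_iff.mpr (Subgroup.mem_center_iff.mp hx g)
      rw [htop, Subgroup.card_top, hcard] at hcx
      have := (Nat.pow_le_pow_iff_right hp1).mp hcx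
      omega
    have hk2 : k ≤ 2 := by
      have hle2 : p ^ k ≤ p ^ 2 := by
        rw [← hkcard]
        exact (Subgroup.card_le_of_le hcenle).trans hcx
      exact (Nat.pow_le_pow_iff_right hp1).mp hle2
    have hk1 : Nat.card (Subgroup.center G) = p := by
      rcases (by omega : k = 1 ∨ k = 2) with h | h
      · rw [hkcard, h, pow_one]
      · exfalso
        have hcc : Subgroup.center G = Subgroup.centralizer ({x} : Set G) :=
          Subgroup.eq_of_le_of_card_ge hcenle (by rw [hkcard, h]; exact hcx)
        exact hxnc (hcc ▸ hxx)
    have hcardQ : Nat.card (G ⧸ Subgroup.center G) = p ^ (n - 1) := by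
      have h1 := Subgroup.card_eq_card_quotient_mul_card_subgroup (Subgroup.center G)
      rw [hcard, hk1] at h1
      have h2 : p ^ (n - 1) * p = Nat.card (G ⧸ Subgroup.center G) * p := by
        rw [← h1, ← pow_succ]
        congr 1
        omega
      exact (Nat.eq_of_mul_eq_mul_right hp.pos h2).symm
    set π := QuotientGroup.mk' (Subgroup.center G) with hπ
    have hπs : Function.Surjective π := QuotientGroup.mk'_surjective _
    set C' := Subgroup.centralizer ({π x} : Set (G ⧸ Subgroup.center G)) with hC'
    set H := C'.comap π with hHdef
    have hmemH : ∀ h : G, h ∈ H → x⁻¹ * h⁻¹ * x * h ∈ Subgroup.center G := by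
      intro h hh
      have hcm : π h * π x = π x * π h := Subgroup.mem_centralizer_singleton_iff.mp hh
      have e : π (x⁻¹ * h⁻¹ * x * h) = 1 := by
        have e2 : (π x)⁻¹ * (π h)⁻¹ * (π x) * (π h) = 1 := by
          rw [mul_assoc, ← hcm]
          group
        simpa only [map_mul, map_inv] using e2
      exact (QuotientGroup.eq_one_iff _).mp e
    let φ : H →* Subgroup.center G :=
      { toFun := fun h => ⟨x⁻¹ * (h : G)⁻¹ * x * (h : G), hmemH (h : G) h.2⟩
        map_one' := by
          ext
          show x⁻¹ * (1 : G)⁻¹ * x * 1 = 1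
          group
        map_mul' := by
          intro h₁ h₂
          ext
          show x⁻¹ * ((h₁ : G) * (h₂ : G))⁻¹ * x * ((h₁ : G) * (h₂ : G)) =
            (x⁻¹ * (h₁ : G)⁻¹ * x * (h₁ : G)) * (x⁻¹ * (h₂ : G)⁻¹ * x * (h₂ : G))
          have hcomm : ∀ g : G, g * (x⁻¹ * (h₁ : G)⁻¹ * x * (h₁ : G)) =
              (x⁻¹ * (h₁ : G)⁻¹ * x * (h₁ : G)) * g :=
            Subgroup.mem_center_iff.mp (hmemH (h₁ : G) h₁.2)
          calc x⁻¹ * ((h₁ : G) * (h₂ : G))⁻¹ * x * ((h₁ : G) * (h₂ : G))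
              = x⁻¹ * (h₂ : G)⁻¹ * x * ((x⁻¹ * (h₁ : G)⁻¹ * x * (h₁ : G)) * (h₂ : G)) := by
                group
            _ = x⁻¹ * (h₂ : G)⁻¹ * x * ((h₂ : G) * (x⁻¹ * (h₁ : G)⁻¹ * x * (h₁ : G))) := by
                rw [← hcomm (h₂ : G)]
            _ = (x⁻¹ * (h₂ : G)⁻¹ * x * (h₂ : G)) * (x⁻¹ * (h₁ : G)⁻¹ * x * (h₁ : G)) := by
                group
            _ = (x⁻¹ * (h₁ : G)⁻¹ * x * (h₁ : G)) * (x⁻¹ * (h₂ : G)⁻¹ * x * (h₂ : G)) :=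
                hcomm _ }
    have hker : Nat.card φ.ker ≤ p ^ 2 := by
      have hinj : Function.Injective
          (fun h : φ.ker => (⟨((h : H) : G), by
            have h1 : x⁻¹ * ((h : H) : G)⁻¹ * x * ((h : H) : G) = 1 := by
              have := h.2
              rw [MonoidHom.mem_ker] at this
              exact congrArg Subtype.val this
            rw [mul_assoc] at h1
            have h2 := inv_eq_of_mul_eq_one_right h1
            rw [Subgroup.mem_centralizer_singleton_iff]
            have h3 : ((h : H) : G) * x = (x⁻¹ * ((h : H) : G)⁻¹)⁻¹ := by
              rw [mul_inv_rev, inv_inv, inv_inv]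
            rw [h3, ← h2]⟩ : Subgroup.centralizer ({x} : Set G))) := by
        intro a b hab
        simp only [Subtype.mk.injEq] at hab
        exact Subtype.ext (Subtype.ext hab)
      exact (Nat.card_le_card_of_injective _ hinj).trans hcx
    have hrange : Nat.card φ.range ≤ p := by
      rw [← hk1]
      exact Subgroup.card_le_card_group _
    have hcardH : Nat.card H ≤ p ^ 3 := by
      have := aux_card_hom φ
      calc Nat.card H = Nat.card φ.range * Nat.card φ.ker := this
        _ ≤ p * p ^ 2 := Nat.mul_le_mul hrange hker
        _ = p ^ 3 := by ring
    -- restriction of π to H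
    set ψ := π.comp H.subtype with hψ
    have hrangeψ : ψ.range = C' := by
      rw [hψ, MonoidHom.range_comp, Subgroup.range_subtype]
      exact Subgroup.map_comap_eq_self_of_surjective hπs C'
    have hcenH : Subgroup.center G ≤ H := by
      intro z hz
      rw [hHdef, Subgroup.mem_comap, hC', Subgroup.mem_centralizer_singleton_iff,
        ← map_mul, ← map_mul, Subgroup.mem_center_iff.mp hz x]
    have hkerψ : p ≤ Nat.card ψ.ker := by
      have hinj : Function.Injective
          (fun z : Subgroup.center G => (⟨⟨(z : G), hcenH z.2⟩, by
            rw [MonoidHom.mem_ker]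
            exact (QuotientGroup.eq_one_iff _).mpr z.2⟩ : ψ.ker)) := by
        intro a b hab
        simp only [Subtype.mk.injEq] at hab
        exact Subtype.ext hab
      rw [← hk1]
      exact Nat.card_le_card_of_injective _ hinj
    have hC'le : Nat.card C' ≤ p ^ 2 := by
      have h1 : Nat.card H = Nat.card C' * Nat.card ψ.ker := by
        rw [← hrangeψ]; exact aux_card_hom ψ
      have h2 : Nat.card C' * p ≤ p ^ 2 * p := by
        calc Nat.card C' * p ≤ Nat.card C' * Nat.card ψ.ker :=
              Nat.mul_le_mul_left _ hkerψ
          _ = Nat.card H := h1.symm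
          _ ≤ p ^ 3 := hcardH
          _ = p ^ 2 * p := by ring
      exact Nat.le_of_mul_le_mul_right h2 hp.pos
    haveI : Group.IsNilpotent (G ⧸ Subgroup.center G) :=
      ((IsPGroup.of_card hcardQ).isNilpotent)
    have hclassQ : Group.nilpotencyClass (G ⧸ Subgroup.center G) = (n - 1) - 1 :=
      ih (n - 1) (by omega) (G ⧸ Subgroup.center G) (by omega) hcardQ (π x) hC'le
    rw [nilpotencyClass_eq_quotient_center_plus_one, hclassQ]
    omega

/-- Every coatom of a finite nilpotent `p`-group contains all commutators and `p`-th powers. -/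
private lemma coatom_facts {p n : ℕ} (hp : p.Prime) {G : Type u} [Group G] [Finite G]
    [Group.IsNilpotent G] (hcard : Nat.card G = p ^ n) {M : Subgroup G} (hM : IsCoatom M) :
    (∀ g h : G, g * h * g⁻¹ * h⁻¹ ∈ M) ∧ (∀ g : G, g ^ p ∈ M) := by
  haveI : Fact p.Prime := ⟨hp⟩
  haveI hnorm : M.Normal :=
    Subgroup.NormalizerCondition.normal_of_coatom M normalizerCondition_of_isNilpotent hM
  have hQp : IsPGroup p (G ⧸ M) := (IsPGroup.of_card hcard).to_quotient M
  -- every nontrivial element generates the quotient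
  have hzp : ∀ q : G ⧸ M, q ≠ 1 → Subgroup.zpowers q = ⊤ := by
    intro q hq
    obtain ⟨g, rfl⟩ := QuotientGroup.mk'_surjective M q
    have hgM : g ∉ M := fun h => hq ((QuotientGroup.eq_one_iff g).mpr h)
    have hle : M ≤ Subgroup.comap (QuotientGroup.mk' M)
        (Subgroup.zpowers (QuotientGroup.mk' M g)) := by
      intro m hm
      simp only [Subgroup.mem_comap, QuotientGroup.mk'_apply]
      rw [(QuotientGroup.eq_one_iff m).mpr hm]
      exact Subgroup.one_mem _
    have hlt : M < Subgroup.comap (QuotientGroup.mk' M)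
        (Subgroup.zpowers (QuotientGroup.mk' M g)) := by
      rw [lt_iff_le_and_ne]
      refine ⟨hle, fun heq => hgM ?_⟩
      rw [heq]
      exact Subgroup.mem_comap.mpr (Subgroup.mem_zpowers _)
    have htop := hM.2 _ hlt
    have := Subgroup.map_comap_eq_self_of_surjective (QuotientGroup.mk'_surjective M)
      (Subgroup.zpowers (QuotientGroup.mk' M g))
    rw [htop] at this
    rw [← this, Subgroup.map_top_of_surjective _ (QuotientGroup.mk'_surjective M)]
  -- the quotient has cardinality p
  have hQnt : Nontrivial (G ⧸ M) := by
    have hMt : M ≠ ⊤ := hM.1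
    have : ∃ g : G, g ∉ M := by
      by_contra hcon
      push_neg at hcon
      exact hMt (eq_top_iff.mpr fun y _ => hcon y)
    obtain ⟨g, hg⟩ := this
    exact ⟨⟨(g : G ⧸ M), 1, fun h => hg ((QuotientGroup.eq_one_iff g).mp h)⟩⟩
  obtain ⟨q0, hq0⟩ := exists_ne (1 : G ⧸ M)
  obtain ⟨k, hk⟩ := IsPGroup.iff_orderOf.mp hQp q0
  have hk1 : 1 ≤ k := by
    by_contra hcon
    have : k = 0 := by omega
    rw [this, pow_zero, orderOf_eq_one_iff] at hk
    exact hq0 hk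
  have hq1p : (q0 ^ p ^ (k - 1)) ^ p = 1 := by
    rw [← pow_mul, ← pow_succ]
    have : k - 1 + 1 = k := by omega
    rw [this, ← hk]
    exact pow_orderOf_eq_one q0
  have hq1ne : q0 ^ p ^ (k - 1) ≠ 1 := by
    intro h
    have hdvd := orderOf_dvd_of_pow_eq_one h
    rw [hk] at hdvd
    have := Nat.le_of_dvd (Nat.pow_pos hp.pos) hdvd
    have := (Nat.pow_le_pow_iff_right hp.one_lt).mp this
    omega
  have horder : orderOf (q0 ^ p ^ (k - 1)) = p := by
    have hdvd : orderOf (q0 ^ p ^ (k - 1)) ∣ p := orderOf_dvd_of_pow_eq_one hq1p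
    rcases (Nat.dvd_prime hp).mp hdvd with h | h
    · exfalso
      exact hq1ne (orderOf_eq_one_iff.mp h)
    · exact h
  have hcardQM : Nat.card (G ⧸ M) = p := by
    calc Nat.card (G ⧸ M) = Nat.card (⊤ : Subgroup (G ⧸ M)) := Subgroup.card_top.symm
      _ = Nat.card (Subgroup.zpowers (q0 ^ p ^ (k - 1))) := by rw [hzp _ hq1ne]
      _ = orderOf (q0 ^ p ^ (k - 1)) := Nat.card_zpowers _
      _ = p := horder
  have hcommQ : ∀ a b : G ⧸ M, a * b = b * a := by
    haveI := isCyclic_of_prime_card (p := p) hcardQM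
    obtain ⟨gen, hgen⟩ := IsCyclic.exists_generator (α := G ⧸ M)
    intro a b
    obtain ⟨i, rfl⟩ := Subgroup.mem_zpowers_iff.mp (hgen a)
    obtain ⟨j, rfl⟩ := Subgroup.mem_zpowers_iff.mp (hgen b)
    exact ((Commute.refl gen).zpow_zpow i j).eq
  constructor
  · intro g h
    rw [← QuotientGroup.eq_one_iff]
    have : ((g * h * g⁻¹ * h⁻¹ : G) : G ⧸ M) =
        (g : G ⧸ M) * h * (g : G ⧸ M)⁻¹ * (h : G ⧸ M)⁻¹ := by
      simp [QuotientGroup.mk_mul, QuotientGroup.mk_inv]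
    rw [this, hcommQ (g : G ⧸ M) (h : G ⧸ M)]
    group
  · intro g
    rw [← QuotientGroup.eq_one_iff]
    have : ((g ^ p : G) : G ⧸ M) = (g : G ⧸ M) ^ p := by
      simp [QuotientGroup.mk_pow]
    rw [this]
    have := orderOf_dvd_natCard (g : G ⧸ M)
    rw [hcardQM] at this
    exact orderOf_dvd_iff_pow_eq_one.mp this

/-- The Frattini quotient of a finite 2-generated nilpotent `p`-group has order at most `p²`. -/
private lemma frattini_index {p n : ℕ} (hp : p.Prime) {G : Type u} [Group G] [Finite G]
    [Group.IsNilpotent G] (hcard : Nat.card G = p ^ n) (hrank : Group.rank G = 2) :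
    Nat.card (G ⧸ frattini G) ≤ p ^ 2 := by
  haveI : Fact p.Prime := ⟨hp⟩
  have hmem : ∀ y : G, (∀ M : Subgroup G, IsCoatom M → y ∈ M) → y ∈ frattini G := by
    intro y hy
    simp only [frattini, Order.radical, Subgroup.mem_iInf, Set.mem_setOf_eq]
    exact fun M hM => hy M hM
  have hcomm' : ∀ g h : G, g * h * g⁻¹ * h⁻¹ ∈ frattini G := fun g h =>
    hmem _ fun M hM => (coatom_facts hp hcard hM).1 g h
  have hpow' : ∀ g : G, g ^ p ∈ frattini G := fun g =>
    hmem _ fun M hM => (coatom_facts hp hcard hM).2 g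
  have hcommA : ∀ a b : G ⧸ frattini G, a * b = b * a := by
    intro a b
    obtain ⟨g, rfl⟩ := QuotientGroup.mk'_surjective (frattini G) a
    obtain ⟨h, rfl⟩ := QuotientGroup.mk'_surjective (frattini G) b
    have h1 : ((g * h * g⁻¹ * h⁻¹ : G) : G ⧸ frattini G) = 1 :=
      (QuotientGroup.eq_one_iff _).mpr (hcomm' g h)
    have h2 : ((g : G ⧸ frattini G) * h * (g : G ⧸ frattini G)⁻¹) * (h : G ⧸ frattini G)⁻¹
        = 1 := by
      rw [← h1]; simp [QuotientGroup.mk_mul, QuotientGroup.mk_inv, mul_assoc]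
    have h3 := mul_inv_eq_one.mp h2
    have h4 := mul_inv_eq_iff_eq_mul.mp h3
    simpa [QuotientGroup.mk'_apply] using h4
  have hpowA : ∀ a : G ⧸ frattini G, a ^ p = 1 := by
    intro a
    obtain ⟨g, rfl⟩ := QuotientGroup.mk'_surjective (frattini G) a
    have : ((g ^ p : G) : G ⧸ frattini G) = 1 := (QuotientGroup.eq_one_iff _).mpr (hpow' g)
    simpa [QuotientGroup.mk_pow] using this
  obtain ⟨S, hScard, hSclosure⟩ := Group.rank_spec G
  rw [hrank] at hScard
  classical
  obtain ⟨a, b, hab, hS⟩ := Finset.card_eq_two.mp hScard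
  rw [hS] at hSclosure
  set A := ((a : G) : G ⧸ frattini G) with hA
  set B := ((b : G) : G ⧸ frattini G) with hB
  have hgen : ∀ y : G ⧸ frattini G, y ∈ Subgroup.closure ({A, B} : Set (G ⧸ frattini G)) := by
    intro y
    obtain ⟨g, rfl⟩ := QuotientGroup.mk'_surjective (frattini G) y
    have hg : g ∈ Subgroup.closure (({a, b} : Finset G) : Set G) := by
      rw [hSclosure]; exact Subgroup.mem_top g
    have hmap : ((g : G) : G ⧸ frattini G) ∈
        (Subgroup.closure (({a, b} : Finset G) : Set G)).map
          (QuotientGroup.mk' (frattini G)) := ⟨g, hg, rfl⟩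
    rw [MonoidHom.map_closure] at hmap
    have himg : (QuotientGroup.mk' (frattini G)) '' (({a, b} : Finset G) : Set G)
        = {A, B} := by
      simp [Set.image_insert_eq, Set.image_singleton, hA, hB]
    rw [himg] at hmap
    simpa using hmap
  have hrep : ∀ y : G ⧸ frattini G, ∃ i j : ℤ, y = A ^ i * B ^ j := by
    intro y
    refine Subgroup.closure_induction ?_ ?_ ?_ ?_ (hgen y)
    · rintro x (rfl | rfl)
      · exact ⟨1, 0, by simp⟩
      · exact ⟨0, 1, by simp⟩
    · exact ⟨0, 0, by simp⟩
    · rintro u v _ _ ⟨i, j, rfl⟩ ⟨k, l, rfl⟩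
      refine ⟨i + k, j + l, ?_⟩
      have hc : B ^ j * A ^ k = A ^ k * B ^ j := hcommA _ _
      calc A ^ i * B ^ j * (A ^ k * B ^ l) = A ^ i * (B ^ j * A ^ k) * B ^ l := by group
        _ = A ^ i * (A ^ k * B ^ j) * B ^ l := by rw [hc]
        _ = A ^ (i + k) * B ^ (j + l) := by rw [zpow_add, zpow_add]; group
    · rintro u _ ⟨i, j, rfl⟩
      refine ⟨-i, -j, ?_⟩
      calc (A ^ i * B ^ j)⁻¹ = B ^ (-j) * A ^ (-i) := by group
        _ = A ^ (-i) * B ^ (-j) := hcommA _ _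
  have hAz : A ^ (p : ℤ) = 1 := by rw [zpow_natCast]; exact hpowA A
  have hBz : B ^ (p : ℤ) = 1 := by rw [zpow_natCast]; exact hpowA B
  have hkey : ∀ (g : G ⧸ frattini G), g ^ (p : ℤ) = 1 → ∀ m : ℤ,
      g ^ m = g ^ ((m % (p : ℤ)).toNat) := by
    intro g hg m
    conv_lhs => rw [← Int.emod_add_mul_ediv m (p : ℤ)]
    rw [zpow_add, zpow_mul, hg, one_zpow, mul_one]
    conv_lhs => rw [← Int.toNat_of_nonneg
      (Int.emod_nonneg m (by exact_mod_cast hp.pos.ne' : (p : ℤ) ≠ 0))]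
    rw [zpow_natCast]
  have hppos : (0 : ℤ) < (p : ℤ) := by exact_mod_cast hp.pos
  have hrep2 : ∀ y : G ⧸ frattini G, ∃ uv : Fin p × Fin p,
      y = A ^ ((uv.1 : ℕ)) * B ^ ((uv.2 : ℕ)) := by
    intro y
    obtain ⟨i, j, rfl⟩ := hrep y
    have hi1 : 0 ≤ i % (p : ℤ) := Int.emod_nonneg i hppos.ne'
    have hi2 : i % (p : ℤ) < p := Int.emod_lt_of_pos i hppos
    have hj1 : 0 ≤ j % (p : ℤ) := Int.emod_nonneg j hppos.ne'
    have hj2 : j % (p : ℤ) < p := Int.emod_lt_of_pos j hppos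
    refine ⟨(⟨(i % (p : ℤ)).toNat, by omega⟩, ⟨(j % (p : ℤ)).toNat, by omega⟩), ?_⟩
    rw [hkey A hAz i, hkey B hBz j]
  have hsurj : Function.Surjective
      (fun uv : Fin p × Fin p => A ^ ((uv.1 : ℕ)) * B ^ ((uv.2 : ℕ))) := by
    intro y
    obtain ⟨uv, hy⟩ := hrep2 y
    exact ⟨uv, hy.symm⟩
  calc Nat.card (G ⧸ frattini G) ≤ Nat.card (Fin p × Fin p) :=
        Nat.card_le_card_of_surjective _ hsurj
    _ = p * p := by simp [Nat.card_prod]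
    _ = p ^ 2 := by ring

/-- If `G` is a finite `p`-group of order `p^n` with `d(G) = 2` which is not of maximal
class, then for every `x ∈ G` there is `t ∈ Φ(G)` which is not of the form `[x, g]`. -/
theorem statement_11 (p n : ℕ) (hp : p.Prime) {G : Type*} [Group G] [Finite G]
    [Group.IsNilpotent G] (hcard : Nat.card G = p ^ n)
    (hrank : Group.rank G = 2) (hnotmax : Group.nilpotencyClass G ≠ n - 1) :
    ∀ x : G, ∃ t ∈ frattini G, ∀ g : G, t ≠ x⁻¹ * g⁻¹ * x * g := by
  intro x
  haveI : Fact p.Prime := ⟨hp⟩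
  have hp1 : 1 < p := hp.one_lt
  have hn2 : 2 ≤ n := by
    by_contra hlt
    interval_cases n
    · -- n = 0 : G is trivial
      have h1 : Nat.card G = 1 := by simpa using hcard
      haveI : Subsingleton G := (Nat.card_eq_one_iff_unique.mp h1).1
      have hcl : Subgroup.closure ((∅ : Finset G) : Set G) = ⊤ := by
        rw [eq_top_iff]
        intro g _
        have : g = 1 := Subsingleton.elim g 1
        rw [this]
        exact Subgroup.one_mem _
      have := Group.rank_le hcl
      simp [hrank] at this
    · -- n = 1 : G is cyclic of order p
      haveI := isCyclic_of_prime_card (p := p) (by simpa using hcard)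
      obtain ⟨g, hg⟩ := IsCyclic.exists_generator (α := G)
      have hcl : Subgroup.closure (({g} : Finset G) : Set G) = ⊤ := by
        rw [Finset.coe_singleton, ← Subgroup.zpowers_eq_closure]
        exact eq_top_iff.mpr fun y _ => hg y
      have := Group.rank_le hcl
      simp [hrank] at this
  by_contra hcon
  push_neg at hcon
  -- hcon : ∀ t ∈ frattini G, ∃ g, t = x⁻¹ * g⁻¹ * x * g
  set C := Subgroup.centralizer ({x} : Set G) with hC
  -- build an injection from the Frattini subgroup into G ⧸ C
  have hchoice : ∀ t : frattini G, ∃ g : G, (t : G) = x⁻¹ * g⁻¹ * x * g := fun t =>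
    hcon (t : G) t.2
  classical
  let sel : frattini G → G := fun t => Classical.choose (hchoice t)
  have hsel : ∀ t : frattini G, (t : G) = x⁻¹ * (sel t)⁻¹ * x * (sel t) := fun t =>
    Classical.choose_spec (hchoice t)
  have hinj : Function.Injective (fun t : frattini G => (((sel t)⁻¹ : G) : G ⧸ C)) := by
    intro t₁ t₂ h12
    have hmem : (sel t₁)⁻¹⁻¹ * (sel t₂)⁻¹ ∈ C := QuotientGroup.eq.mp h12
    rw [inv_inv] at hmem
    have hcomm : (sel t₁ * (sel t₂)⁻¹) * x = x * (sel t₁ * (sel t₂)⁻¹) :=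
      Subgroup.mem_centralizer_singleton_iff.mp hmem
    apply Subtype.ext
    rw [hsel t₁, hsel t₂]
    -- from hcomm : c * x = x * c with c = sel t₁ * (sel t₂)⁻¹
    -- conclude x⁻¹ * (sel t₁)⁻¹ * x * sel t₁ = x⁻¹ * (sel t₂)⁻¹ * x * sel t₂
    have h5 : (sel t₁)⁻¹ * x * (sel t₁) = (sel t₂)⁻¹ * x * (sel t₂) := by
      have h6 : x * (sel t₁ * (sel t₂)⁻¹) * (sel t₂) = (sel t₁ * (sel t₂)⁻¹) * x * (sel t₂) := by
        rw [hcomm]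
      calc (sel t₁)⁻¹ * x * (sel t₁)
          = (sel t₁)⁻¹ * (x * (sel t₁ * (sel t₂)⁻¹) * (sel t₂)) := by group
        _ = (sel t₁)⁻¹ * ((sel t₁ * (sel t₂)⁻¹) * x * (sel t₂)) := by rw [h6]
        _ = (sel t₂)⁻¹ * x * (sel t₂) := by group
    calc x⁻¹ * (sel t₁)⁻¹ * x * (sel t₁) = x⁻¹ * ((sel t₁)⁻¹ * x * (sel t₁)) := by group
      _ = x⁻¹ * ((sel t₂)⁻¹ * x * (sel t₂)) := by rw [h5]
      _ = x⁻¹ * (sel t₂)⁻¹ * x * (sel t₂) := by group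
  have hcard1 : Nat.card (frattini G) ≤ Nat.card (G ⧸ C) :=
    Nat.card_le_card_of_injective _ hinj
  have hfr : Nat.card (G ⧸ frattini G) ≤ p ^ 2 := frattini_index hp hcard hrank
  have hG1 : Nat.card G = Nat.card (G ⧸ frattini G) * Nat.card (frattini G) :=
    Subgroup.card_eq_card_quotient_mul_card_subgroup (frattini G)
  have hG2 : Nat.card G = Nat.card (G ⧸ C) * Nat.card C :=
    Subgroup.card_eq_card_quotient_mul_card_subgroup C
  have hQCpos : 0 < Nat.card (G ⧸ C) := Nat.card_pos
  have hCle : Nat.card C ≤ p ^ 2 := by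
    have h7 : Nat.card (G ⧸ C) * Nat.card C ≤ Nat.card (G ⧸ C) * p ^ 2 := by
      calc Nat.card (G ⧸ C) * Nat.card C = Nat.card G := hG2.symm
        _ = Nat.card (G ⧸ frattini G) * Nat.card (frattini G) := hG1
        _ ≤ p ^ 2 * Nat.card (G ⧸ C) := Nat.mul_le_mul hfr hcard1
        _ = Nat.card (G ⧸ C) * p ^ 2 := by ring
    exact Nat.le_of_mul_le_mul_left h7 hQCpos
  have := key_lemma p hp n G hn2 hcard x hCle
  exact hnotmax this
end
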